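/- arXiv:2205.09668 — 2 statements merged into one kernel-verified Lean document; each statement's English description precedes it below -/
import Mathlib

section
/- Let V be a finite nonempty type and let P be an X-set property on finite subsets of V. If there exists a graph automorphism φ of the P-TAR graph such that φ(V) ≠ V (i.e., φ does not fix the vertex given by the full set V), then the P-TAR graph has a perfect matching. -/
/-- The TAR (token addition/removal) graph of a predicate `P` on finite subsets of `V`:
vertices are the `P`-sets, two `P`-sets being adjacent iff their symmetric difference
has exactly one element. -/
def tarGraph {V : Type*} [DecidableEq V] (P : Finset V → Prop) :
    SimpleGraph {S : Finset V // P S} where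
  Adj S T := (symmDiff S.1 T.1).card = 1
  symm := ⟨fun S T (h : (symmDiff S.1 T.1).card = 1) =>
    show (symmDiff T.1 S.1).card = 1 by rwa [symmDiff_comm]⟩
  loopless := ⟨fun S (h : (symmDiff S.1 S.1).card = 1) => by simp [symmDiff_self] at h⟩

/-- `S` is a minimal `P`-set: `S` is a `P`-set and no proper subset of `S` is a `P`-set. -/
def IsMinimalPSet {V : Type*} (P : Finset V → Prop) (S : Finset V) : Prop :=
  P S ∧ ∀ T : Finset V, T ⊂ S → ¬ P T

/-- `R` is `P`-irrelevant: no minimal `P`-set contains any vertex of `R`. -/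
def IsIrrelevant {V : Type*} (P : Finset V → Prop) (R : Finset V) : Prop :=
  ∀ S : Finset V, IsMinimalPSet P S → ∀ v ∈ R, v ∉ S

section Aux

variable {V : Type*} [DecidableEq V] {P : Finset V → Prop}

lemma aux_symmDiff_card_triangle (a b c : Finset V) :
    (symmDiff a c).card ≤ (symmDiff a b).card + (symmDiff b c).card :=
  le_trans (Finset.card_le_card (symmDiff_triangle a b c)) (Finset.card_union_le _ _)

lemma aux_walk_le {a b : {S : Finset V // P S}} (p : (tarGraph P).Walk a b) :
    (symmDiff a.1 b.1).card ≤ p.length := by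
  induction p with
  | nil => simp [symmDiff_self]
  | @cons u v w h p ih =>
      have h1 : (symmDiff u.1 v.1).card = 1 := h
      have := aux_symmDiff_card_triangle u.1 v.1 w.1
      simp only [SimpleGraph.Walk.length_cons]
      omega

lemma aux_symmDiff_singleton_mem {s : Finset V} {x : V} (h : x ∈ s) :
    symmDiff s {x} = s.erase x := by
  ext y
  by_cases hy : y = x <;> simp [Finset.mem_symmDiff, hy, h]

lemma aux_symmDiff_singleton_not_mem {s : Finset V} {x : V} (h : x ∉ s) :
    symmDiff s {x} = insert x s := by
  ext y
  by_cases hy : y = x <;> simp [Finset.mem_symmDiff, hy, h]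

lemma aux_walk_exists (hP1 : ∀ S T : Finset V, P S → S ⊆ T → P T) :
    ∀ (n : ℕ) (a b : {S : Finset V // P S}), (symmDiff a.1 b.1).card = n →
      ∃ p : (tarGraph P).Walk a b, p.length = n := by
  intro n
  induction n with
  | zero =>
      intro a b h
      have : a = b := by
        ext1
        have := Finset.card_eq_zero.mp h
        have h2 : ∀ y, y ∈ a.1 ↔ y ∈ b.1 := by
          intro y
          by_contra hy
          have : y ∈ symmDiff a.1 b.1 := by
            simp only [Finset.mem_symmDiff]; tauto
          simp [this] at *; simp_all
        exact Finset.ext h2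
      subst this
      exact ⟨SimpleGraph.Walk.nil, rfl⟩
  | succ n ih =>
      intro a b h
      -- pick x : prefer x ∈ b \ a
      by_cases hba : (b.1 \ a.1).Nonempty
      · obtain ⟨x, hx⟩ := hba
        have hxb : x ∈ b.1 := (Finset.mem_sdiff.mp hx).1
        have hxa : x ∉ a.1 := (Finset.mem_sdiff.mp hx).2
        have hxs : x ∈ symmDiff a.1 b.1 := by
          simp [Finset.mem_symmDiff, hxa, hxb]
        have hPc : P (symmDiff a.1 {x}) := by
          rw [aux_symmDiff_singleton_not_mem hxa]
          exact hP1 a.1 _ a.2 (Finset.subset_insert _ _)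
        set c : {S : Finset V // P S} := ⟨symmDiff a.1 {x}, hPc⟩ with hc
        have hadj : (tarGraph P).Adj a c := by
          show (symmDiff a.1 (symmDiff a.1 {x})).card = 1
          rw [symmDiff_symmDiff_cancel_left]
          simp
        have hcb : symmDiff c.1 b.1 = (symmDiff a.1 b.1).erase x := by
          show symmDiff (symmDiff a.1 {x}) b.1 = _
          rw [symmDiff_comm a.1, symmDiff_assoc, symmDiff_comm,
            aux_symmDiff_singleton_mem hxs]
        have hcard : (symmDiff c.1 b.1).card = n := by
          rw [hcb, Finset.card_erase_of_mem hxs, h]; rfl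
        obtain ⟨p, hp⟩ := ih c b hcard
        exact ⟨SimpleGraph.Walk.cons hadj p, by simp [hp]⟩
      · have hsub : b.1 ⊆ a.1 := by
          intro y hy
          by_contra hya
          exact hba ⟨y, Finset.mem_sdiff.mpr ⟨hy, hya⟩⟩
        have hab : (a.1 \ b.1).Nonempty := by
          rw [Finset.sdiff_nonempty]
          intro hba2
          have : symmDiff a.1 b.1 = ∅ := by
            have : a.1 = b.1 := Finset.Subset.antisymm hba2 hsub
            simp [this, symmDiff_self]
          simp [this] at h
        obtain ⟨x, hx⟩ := hab
        have hxa : x ∈ a.1 := (Finset.mem_sdiff.mp hx).1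
        have hxb : x ∉ b.1 := (Finset.mem_sdiff.mp hx).2
        have hxs : x ∈ symmDiff a.1 b.1 := by
          simp [Finset.mem_symmDiff, hxa, hxb]
        have hPc : P (symmDiff a.1 {x}) := by
          rw [aux_symmDiff_singleton_mem hxa]
          exact hP1 b.1 _ b.2 (fun y hy => Finset.mem_erase.mpr
            ⟨fun hyx => hxb (hyx ▸ hy), hsub hy⟩)
        set c : {S : Finset V // P S} := ⟨symmDiff a.1 {x}, hPc⟩ with hc
        have hadj : (tarGraph P).Adj a c := by
          show (symmDiff a.1 (symmDiff a.1 {x})).card = 1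
          rw [symmDiff_symmDiff_cancel_left]
          simp
        have hcb : symmDiff c.1 b.1 = (symmDiff a.1 b.1).erase x := by
          show symmDiff (symmDiff a.1 {x}) b.1 = _
          rw [symmDiff_comm a.1, symmDiff_assoc, symmDiff_comm,
            aux_symmDiff_singleton_mem hxs]
        have hcard : (symmDiff c.1 b.1).card = n := by
          rw [hcb, Finset.card_erase_of_mem hxs, h]; rfl
        obtain ⟨p, hp⟩ := ih c b hcard
        exact ⟨SimpleGraph.Walk.cons hadj p, by simp [hp]⟩

lemma aux_iso_hamming (hP1 : ∀ S T : Finset V, P S → S ⊆ T → P T)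
    (φ : tarGraph P ≃g tarGraph P) (a b : {S : Finset V // P S}) :
    (symmDiff (φ a).1 (φ b).1).card = (symmDiff a.1 b.1).card := by
  have key : ∀ (ψ : tarGraph P ≃g tarGraph P) (a b : {S : Finset V // P S}),
      (symmDiff (ψ a).1 (ψ b).1).card ≤ (symmDiff a.1 b.1).card := by
    intro ψ a b
    obtain ⟨p, hp⟩ := aux_walk_exists hP1 _ a b rfl
    have := aux_walk_le (p.map ψ.toHom)
    rwa [SimpleGraph.Walk.length_map, hp] at this
  refine le_antisymm (key φ a b) ?_
  have := key φ.symm (φ a) (φ b)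
  simpa using this

end Aux


/-- Let `P` be an X-set property on finite subsets of a nonempty finite type `V`.
If some graph automorphism of the `P`-TAR graph does not fix the vertex given by the
full set `V`, then the `P`-TAR graph has a perfect matching. -/
theorem perfect_matching_of_automorphism_moving_univ {V : Type*}
    [Fintype V] [DecidableEq V] [Nonempty V]
    (P : Finset V → Prop)
    (hP1 : ∀ S T : Finset V, P S → S ⊆ T → P T)
    (hP2 : ¬ P ∅)
    (hP3 : ∀ v : V, P (Finset.univ \ {v}))
    (φ : tarGraph P ≃g tarGraph P)
    (hφ : (φ ⟨Finset.univ,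
        hP1 _ _ (hP3 (Classical.arbitrary V)) (Finset.subset_univ _)⟩).1 ≠ Finset.univ) :
    ∃ M : (tarGraph P).Subgraph, M.IsPerfectMatching := by
  classical
  set top : {S : Finset V // P S} :=
    ⟨Finset.univ, hP1 _ _ (hP3 (Classical.arbitrary V)) (Finset.subset_univ _)⟩ with htop
  set U : Finset V := (φ top).1 with hU
  have hc := aux_iso_hamming hP1 φ
  -- symmDiff with univ is complement
  have hsd_univ : ∀ s : Finset V, symmDiff s Finset.univ = Finset.univ \ s := by
    intro s; ext y; simp [Finset.mem_symmDiff]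
  -- definition of g
  have hAcard : ∀ v : V, (symmDiff (φ ⟨Finset.univ \ {v}, hP3 v⟩).1 U).card = 1 := by
    intro v
    have := hc ⟨Finset.univ \ {v}, hP3 v⟩ top
    rw [show (top.1 : Finset V) = Finset.univ from rfl] at this
    rw [hsd_univ] at this
    rw [Finset.sdiff_sdiff_self_left] at this
    simpa using this
  choose g hg using fun v => Finset.card_eq_one.mp (hAcard v)
  have hA : ∀ v : V, (φ ⟨Finset.univ \ {v}, hP3 v⟩).1 = symmDiff U {g v} := by
    intro v
    have := hg v
    rw [← this, symmDiff_comm (φ ⟨Finset.univ \ {v}, hP3 v⟩).1 U,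
      symmDiff_symmDiff_cancel_left]
  have ginj : Function.Injective g := by
    intro v w hvw
    have h1 : (φ ⟨Finset.univ \ {v}, hP3 v⟩) = (φ ⟨Finset.univ \ {w}, hP3 w⟩) := by
      ext1
      rw [hA v, hA w, hvw]
    have h2 := φ.injective h1
    have h3 : Finset.univ \ {v} = Finset.univ \ {w} := congrArg Subtype.val h2
    have : ({v} : Finset V) = {w} := by
      have := congrArg (fun s => Finset.univ \ s) h3
      simpa [Finset.sdiff_sdiff_self_left] using this
    simpa using Finset.singleton_injective this
  have gsurj : Function.Surjective g := Finite.surjective_of_injective ginj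
  -- membership criterion
  have hmem : ∀ (s : {S : Finset V // P S}) (v : V),
      g v ∈ symmDiff (φ s).1 U ↔ v ∉ s.1 := by
    intro s v
    have hdist := hc s ⟨Finset.univ \ {v}, hP3 v⟩
    have hbase := hc s top
    rw [show (top.1 : Finset V) = Finset.univ from rfl, hsd_univ] at hbase
    -- LHS of hdist
    have hL : symmDiff (φ s).1 (φ ⟨Finset.univ \ {v}, hP3 v⟩).1
        = symmDiff (symmDiff (φ s).1 U) {g v} := by
      rw [hA v, ← symmDiff_assoc]
    have hR : symmDiff s.1 (Finset.univ \ {v})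
        = symmDiff (Finset.univ \ s.1) {v} := by
      rw [show Finset.univ \ ({v} : Finset V) = symmDiff Finset.univ {v} by
          rw [symmDiff_comm]; ext y; simp [Finset.mem_symmDiff]]
      rw [← symmDiff_assoc, hsd_univ]
    rw [hL, hR] at hdist
    set t := symmDiff (φ s).1 U with ht
    set u := Finset.univ \ s.1 with hu
    have hcards : t.card = u.card := hbase
    constructor
    · intro hgv hv
      have hv' : v ∉ u := by simp [hu, hv]
      rw [aux_symmDiff_singleton_mem hgv, aux_symmDiff_singleton_not_mem hv'] at hdist
      rw [Finset.card_erase_of_mem hgv, Finset.card_insert_of_notMem hv'] at hdist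
      have ht0 : t.card ≠ 0 := by
        intro h0
        rw [Finset.card_eq_zero.mp h0] at hgv
        simp at hgv
      omega
    · intro hv
      by_contra hgv
      have hv' : v ∈ u := by simp [hu, hv]
      rw [aux_symmDiff_singleton_not_mem hgv, aux_symmDiff_singleton_mem hv'] at hdist
      rw [Finset.card_insert_of_notMem hgv, Finset.card_erase_of_mem hv'] at hdist
      omega
  -- formula: symmDiff (φ s).1 U = (univ \ s.1).image g
  have hform : ∀ s : {S : Finset V // P S},
      symmDiff (φ s).1 U = (Finset.univ \ s.1).image g := by
    intro s
    ext x
    constructor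
    · intro hx
      obtain ⟨v, rfl⟩ := gsurj x
      refine Finset.mem_image.mpr ⟨v, ?_, rfl⟩
      simp [(hmem s v).mp hx]
    · intro hx
      obtain ⟨v, hv, rfl⟩ := Finset.mem_image.mp hx
      exact (hmem s v).mpr (by simpa using (Finset.mem_sdiff.mp hv).2)
  -- closure under intersection with U
  have hinter : ∀ s : {S : Finset V // P S}, P (U ∩ s.1) := by
    intro s
    set T := φ.symm s with hT
    have h1 : symmDiff s.1 U = (Finset.univ \ T.1).image g := by
      have h := hform T
      rwa [hT, φ.apply_symm_apply] at h
    set W : Finset V := Finset.univ.filter (fun v => g v ∉ U \ s.1) with hW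
    have hTW : T.1 ⊆ W := by
      intro v hv
      simp only [hW, Finset.mem_filter, Finset.mem_univ, true_and]
      intro hgv
      have hmem2 : g v ∈ symmDiff s.1 U := by
        simp only [Finset.mem_symmDiff]
        exact Or.inr ⟨(Finset.mem_sdiff.mp hgv).1, (Finset.mem_sdiff.mp hgv).2⟩
      rw [h1] at hmem2
      obtain ⟨w, hw, hgw⟩ := Finset.mem_image.mp hmem2
      have hwv := ginj hgw
      subst hwv
      exact (Finset.mem_sdiff.mp hw).2 hv
    have hPW : P W := hP1 T.1 W T.2 hTW
    have h2 : (Finset.univ \ W).image g = U \ s.1 := by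
      ext x
      constructor
      · intro hx
        obtain ⟨v, hv, rfl⟩ := Finset.mem_image.mp hx
        have hv2 := (Finset.mem_sdiff.mp hv).2
        simp only [hW, Finset.mem_filter, Finset.mem_univ, true_and] at hv2
        exact not_not.mp hv2
      · intro hx
        obtain ⟨v, rfl⟩ := gsurj x
        refine Finset.mem_image.mpr ⟨v, ?_, rfl⟩
        rw [Finset.mem_sdiff]
        refine ⟨Finset.mem_univ _, ?_⟩
        simp only [hW, Finset.mem_filter, Finset.mem_univ, true_and, not_not]
        exact hx
    have h3 := hform ⟨W, hPW⟩
    rw [h2] at h3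
    have h4 : (φ ⟨W, hPW⟩).1 = U ∩ s.1 := by
      have h5 : (φ ⟨W, hPW⟩).1
          = symmDiff (symmDiff (φ ⟨W, hPW⟩).1 U) U :=
        (symmDiff_symmDiff_cancel_right _ _).symm
      rw [h5, h3]
      ext y
      simp only [Finset.mem_symmDiff, Finset.mem_sdiff, Finset.mem_inter]
      tauto
    rw [← h4]
    exact (φ ⟨W, hPW⟩).2
  -- pick r outside U
  obtain ⟨r, hr⟩ : (Finset.univ \ U).Nonempty := by
    rw [Finset.sdiff_nonempty]
    intro hsub
    exact hφ (Finset.Subset.antisymm hsub (Finset.subset_univ _)).symm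
  have hrU : r ∉ U := (Finset.mem_sdiff.mp hr).2
  have hkey : ∀ s : {S : Finset V // P S}, P (symmDiff s.1 {r}) := by
    intro s
    refine hP1 (U ∩ s.1) _ (hinter s) ?_
    intro x hx
    obtain ⟨hxU, hxs⟩ := Finset.mem_inter.mp hx
    simp only [Finset.mem_symmDiff, Finset.mem_singleton]
    exact Or.inl ⟨hxs, fun h => hrU (h ▸ hxU)⟩
  refine ⟨⟨Set.univ, fun a b => symmDiff a.1 b.1 = {r}, ?_, ?_, ?_⟩, ?_⟩
  · intro a b hab
    show (symmDiff a.1 b.1).card = 1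
    rw [hab]
    simp
  · intro a b _
    trivial
  · refine ⟨fun a b (hab : symmDiff a.1 b.1 = {r}) => show symmDiff b.1 a.1 = {r} from ?_⟩
    rwa [symmDiff_comm]
  · rw [SimpleGraph.Subgraph.isPerfectMatching_iff]
    intro v
    refine ⟨⟨symmDiff v.1 {r}, hkey v⟩, ?_, ?_⟩
    · show symmDiff v.1 (symmDiff v.1 {r}) = {r}
      rw [symmDiff_symmDiff_cancel_left]
    · intro y hy
      have hy' : symmDiff v.1 y.1 = {r} := hy
      ext1
      show y.1 = symmDiff v.1 {r}
      rw [← hy', symmDiff_symmDiff_cancel_left]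
end

section
/- Let G be a connected simple graph on n ≥ 2 vertices. If the zero forcing TAR graph of G is isomorphic to the star K_{1,n}, then G is isomorphic to the complete graph K_n. -/
/-- A set `B` is forcing-closed in `G` if no vertex of `B` has exactly one neighbor
outside `B` (i.e. no force can be performed from `B`). The zero forcing closure of `S`
is the smallest forcing-closed set containing `S`. -/
def ZFClosed {V : Type*} (G : SimpleGraph V) (B : Finset V) : Prop :=
  ∀ v ∈ B, ¬ ∃! w : V, G.Adj v w ∧ w ∉ B

/-- `S` is a zero forcing set of `G`: the zero forcing closure of `S` is all of `V`,
equivalently every forcing-closed set containing `S` is all of `V`. -/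
def IsZeroForcingSet {V : Type*} [Fintype V] (G : SimpleGraph V) (S : Finset V) : Prop :=
  ∀ B : Finset V, S ⊆ B → ZFClosed G B → B = Finset.univ

lemma zfs_mono {V : Type*} [Fintype V] {G : SimpleGraph V} {S T : Finset V}
    (hS : IsZeroForcingSet G S) (hST : S ⊆ T) : IsZeroForcingSet G T :=
  fun B hTB hc => hS B (hST.trans hTB) hc

lemma zfs_univ {V : Type*} [Fintype V] (G : SimpleGraph V) :
    IsZeroForcingSet G Finset.univ :=
  fun B hB _ => Finset.univ_subset_iff.mp hB

/-- If `G` is a connected graph on `n ≥ 2` vertices whose zero forcing TAR graph is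
isomorphic to the star `K_{1,n}`, then `G` is isomorphic to the complete graph `K_n`. -/
theorem complete_of_zTar_iso_star {W : Type*} [Fintype W] [DecidableEq W]
    (G : SimpleGraph W) (n : ℕ) (hn : 2 ≤ n) (hcard : Fintype.card W = n)
    (hconn : G.Connected)
    (h : Nonempty
      (tarGraph (IsZeroForcingSet G) ≃g completeBipartiteGraph (Fin 1) (Fin n))) :
    Nonempty (G ≃g (⊤ : SimpleGraph (Fin n))) := by
  obtain ⟨e⟩ := h
  have hcomp : ∀ u v : W, u ≠ v → G.Adj u v := by
    by_contra hnc
    push_neg at hnc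
    obtain ⟨u, v, huv, hnadj⟩ := hnc
    -- find a triple a ~ z ~ b with ¬ a ~ b
    have htriple : ∃ a z b : W, G.Adj a z ∧ G.Adj z b ∧ a ≠ b ∧ ¬ G.Adj a b := by
      by_contra hnt
      push_neg at hnt
      have key : ∀ (x y : W) (w : G.Walk x y), x ≠ y → G.Adj x y := by
        intro x y w
        induction w with
        | nil => intro hx; exact absurd rfl hx
        | @cons p q r hpq w ih =>
          intro hne
          by_cases hqr : q = r
          · subst hqr; exact hpq
          · exact hnt p q r hpq (ih hqr) hne
      obtain ⟨w⟩ := hconn.preconnected u v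
      exact hnadj (key u v w huv)
    obtain ⟨a, z, b, haz, hzb, hab, hnab⟩ := htriple
    have hza : z ≠ a := haz.ne'
    have hzb' : z ≠ b := hzb.ne
    set S : Finset W := Finset.univ \ {z, b} with hSdef
    have hzS : z ∉ S := by simp [hSdef]
    have hbS : b ∉ S := by simp [hSdef]
    have haS : a ∈ S := by simp [hSdef, hza.symm, hab]
    -- S is a zero forcing set
    have hS : IsZeroForcingSet G S := by
      intro B hsub hcl
      have houtside : ∀ x : W, x ∉ B → x = z ∨ x = b := by
        intro x hx
        by_contra hc
        push_neg at hc
        exact hx (hsub (by simp [hSdef, hc.1, hc.2]))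
      have hzB : z ∈ B := by
        by_contra hzB
        exact hcl a (hsub haS) ⟨z, ⟨haz, hzB⟩, by
          rintro y ⟨hay, hyB⟩
          rcases houtside y hyB with rfl | rfl
          · rfl
          · exact absurd hay hnab⟩
      have hbB : b ∈ B := by
        by_contra hbB
        exact hcl z hzB ⟨b, ⟨hzb, hbB⟩, by
          rintro y ⟨hzy, hyB⟩
          rcases houtside y hyB with rfl | rfl
          · exact absurd hzy (G.irrefl)
          · rfl⟩
      apply Finset.eq_univ_of_forall
      intro x
      by_contra hx
      rcases houtside x hx with rfl | rfl
      · exact hx hzB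
      · exact hx hbB
    -- four zero forcing sets forming a 4-cycle
    have hSz : IsZeroForcingSet G (insert z S) := zfs_mono hS (Finset.subset_insert _ _)
    have hSb : IsZeroForcingSet G (insert b S) := zfs_mono hS (Finset.subset_insert _ _)
    set X : {T : Finset W // IsZeroForcingSet G T} := ⟨S, hS⟩
    set Pz : {T : Finset W // IsZeroForcingSet G T} := ⟨insert z S, hSz⟩
    set Pb : {T : Finset W // IsZeroForcingSet G T} := ⟨insert b S, hSb⟩
    set U : {T : Finset W // IsZeroForcingSet G T} := ⟨Finset.univ, zfs_univ G⟩
    have hXU : X ≠ U := by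
      intro hxu
      have : (X : {T : Finset W // IsZeroForcingSet G T}).1 = U.1 := by rw [hxu]
      simp only [X, U] at this
      rw [this] at hzS
      exact hzS (Finset.mem_univ z)
    have hPzPb : Pz ≠ Pb := by
      intro hpp
      have : (Pz : {T : Finset W // IsZeroForcingSet G T}).1 = Pb.1 := by rw [hpp]
      simp only [Pz, Pb] at this
      have hz1 : z ∈ insert b S := this ▸ Finset.mem_insert_self z S
      rcases Finset.mem_insert.mp hz1 with h1 | h1
      · exact hzb' h1
      · exact hzS h1
    have adjXPz : (tarGraph (IsZeroForcingSet G)).Adj X Pz := by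
      show (symmDiff S (insert z S)).card = 1
      have : symmDiff S (insert z S) = {z} := by
        ext x
        simp only [Finset.mem_symmDiff, Finset.mem_insert, Finset.mem_singleton]
        constructor
        · rintro (⟨hxS, hx⟩ | ⟨hx, hxS⟩)
          · exact absurd (Or.inr hxS) hx
          · rcases hx with rfl | hx
            · rfl
            · exact absurd hx hxS
        · rintro rfl; exact Or.inr ⟨Or.inl rfl, hzS⟩
      rw [this]; simp
    have adjXPb : (tarGraph (IsZeroForcingSet G)).Adj X Pb := by
      show (symmDiff S (insert b S)).card = 1
      have : symmDiff S (insert b S) = {b} := by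
        ext x
        simp only [Finset.mem_symmDiff, Finset.mem_insert, Finset.mem_singleton]
        constructor
        · rintro (⟨hxS, hx⟩ | ⟨hx, hxS⟩)
          · exact absurd (Or.inr hxS) hx
          · rcases hx with rfl | hx
            · rfl
            · exact absurd hx hxS
        · rintro rfl; exact Or.inr ⟨Or.inl rfl, hbS⟩
      rw [this]; simp
    have hinsz : insert z S = Finset.univ \ {b} := by
      ext x
      simp only [hSdef, Finset.mem_insert, Finset.mem_sdiff, Finset.mem_univ, true_and,
        Finset.mem_singleton]
      constructor
      · rintro (rfl | hx)
        · exact hzb'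
        · tauto
      · intro hb
        by_cases hz : x = z
        · exact Or.inl hz
        · exact Or.inr (by tauto)
    have hinsb : insert b S = Finset.univ \ {z} := by
      ext x
      simp only [hSdef, Finset.mem_insert, Finset.mem_sdiff, Finset.mem_univ, true_and,
        Finset.mem_singleton]
      constructor
      · rintro (rfl | hx)
        · exact hzb'.symm
        · tauto
      · intro hz
        by_cases hb : x = b
        · exact Or.inl hb
        · exact Or.inr (by tauto)
    have adjUPz : (tarGraph (IsZeroForcingSet G)).Adj U Pz := by
      show (symmDiff Finset.univ (insert z S)).card = 1
      have hscd : symmDiff Finset.univ (insert z S) = {b} := by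
        rw [hinsz]
        ext x
        simp [Finset.mem_symmDiff]
      rw [hscd]; simp
    have adjUPb : (tarGraph (IsZeroForcingSet G)).Adj U Pb := by
      show (symmDiff Finset.univ (insert b S)).card = 1
      have hscd : symmDiff Finset.univ (insert b S) = {z} := by
        rw [hinsb]
        ext x
        simp [Finset.mem_symmDiff]
      rw [hscd]; simp
    -- map through e
    have a1 := e.map_rel_iff.mpr adjXPz
    have a2 := e.map_rel_iff.mpr adjXPb
    have a3 := e.map_rel_iff.mpr adjUPz
    have heXU : e X ≠ e U := fun hh => hXU (e.toEquiv.injective hh)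
    have hePzPb : e Pz ≠ e Pb := fun hh => hPzPb (e.toEquiv.injective hh)
    rcases hX : e X with i | i <;> rw [hX] at a1 a2 heXU
    · rcases hPz : e Pz with j | j <;> rw [hPz] at a1 a3 hePzPb
      · simp [completeBipartiteGraph] at a1
      · rcases hU : e U with k | k <;> rw [hU] at a3 heXU
        · exact heXU (by rw [Subsingleton.elim i k])
        · simp [completeBipartiteGraph] at a3
    · rcases hPz : e Pz with j | j <;> rw [hPz] at a1 a3 hePzPb
      · rcases hPb : e Pb with k | k <;> rw [hPb] at a2 hePzPb
        · exact hePzPb (by rw [Subsingleton.elim j k])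
        · simp [completeBipartiteGraph] at a2
      · simp [completeBipartiteGraph] at a1
  -- G is complete; build the iso
  let f : W ≃ Fin n := Fintype.equivFinOfCardEq hcard
  exact ⟨⟨f, by
    intro x y
    simp only [SimpleGraph.top_adj, ne_eq, EmbeddingLike.apply_eq_iff_eq]
    constructor
    · intro hxy; exact hcomp x y hxy
    · intro hadj; exact hadj.ne⟩⟩
end
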